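/- Let A(t) = [I, tI, t²I, ..., tⁿI, ρ(t)] ∈ ℝ^{3×(3n+4)} where ρ : ℝ → ℝ^3 is N-times differentiable. The stacked matrix Ā(t) of A(t) and its derivatives A'(t), ..., A^{(N)}(t), with N ≥ n+1, has full column rank 3n+4 if and only if there exists i ∈ {n+1, ..., N} such that ρ^{(i)}(t) ≠ 0. -/

import Mathlib

open Matrix

lemma itd_zero (m : ℕ) : iteratedDeriv m (fun _ : ℝ => (0:ℝ)) = fun _ => 0 := by
  induction m with
  | zero => simp [iteratedDeriv_zero]
  | succ m ih => rw [iteratedDeriv_succ, ih]; funext x; simp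

lemma itd_pow (k : ℕ) : ∀ m : ℕ, iteratedDeriv m (fun x : ℝ => x ^ k) =
    fun x => (k.descFactorial m : ℝ) * x ^ (k - m) := by
  intro m
  induction m with
  | zero => funext x; simp
  | succ m ih =>
    rw [iteratedDeriv_succ, ih]
    funext x
    rw [deriv_const_mul _ (differentiable_pow _ |>.differentiableAt), deriv_pow_field,
      Nat.descFactorial_succ, Nat.sub_sub]
    push_cast
    ring

lemma itd_proj {N : ℕ} (ρ : ℝ → Fin 3 → ℝ) (hρ : ContDiff ℝ (N : ℕ∞) ρ)
    (m : ℕ) (hm : m ≤ N) (j : Fin 3) (t : ℝ) :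
    iteratedDeriv m (fun s => ρ s j) t = iteratedDeriv m ρ t j := by
  have h := (ContinuousLinearMap.proj (R := ℝ) (φ := fun _ : Fin 3 => ℝ) j).iteratedFDeriv_comp_left
    (i := m) (hρ.contDiffAt (x := t)) (by exact_mod_cast hm)
  rw [iteratedDeriv_eq_iteratedFDeriv]
  have h2 : (fun s => ρ s j)
      = (ContinuousLinearMap.proj (R := ℝ) (φ := fun _ : Fin 3 => ℝ) j) ∘ ρ := rfl
  rw [h2, h]
  rfl

theorem stacked_derivative_matrix_full_rank_iff
    (n N : ℕ) (hN : n + 1 ≤ N) (ρ : ℝ → Fin 3 → ℝ)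
    (hρ : ContDiff ℝ (N : ℕ∞) ρ) (t : ℝ)
    (Abar : Matrix (Fin (N + 1) × Fin 3) (Fin (3 * n + 4)) ℝ)
    (hAbar : Abar = Matrix.of fun (p : Fin (N + 1) × Fin 3)
        (c : Fin (3 * n + 4)) =>
      iteratedDeriv (p.1 : ℕ)
        (fun s : ℝ =>
          if (c : ℕ) < 3 * n + 3 then
            (if (c : ℕ) % 3 = (p.2 : ℕ) then s ^ ((c : ℕ) / 3) else 0)
          else ρ s p.2) t) :
    Abar.rank = 3 * n + 4 ↔
      ∃ i, n + 1 ≤ i ∧ i ≤ N ∧ iteratedDeriv i ρ t ≠ 0 := by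
  have hA : ∀ (p : Fin (N + 1) × Fin 3) (c : Fin (3 * n + 4)),
      Abar p c = iteratedDeriv (p.1 : ℕ)
        (fun s : ℝ =>
          if (c : ℕ) < 3 * n + 3 then
            (if (c : ℕ) % 3 = (p.2 : ℕ) then s ^ ((c : ℕ) / 3) else 0)
          else ρ s p.2) t := by
    intro p c; rw [hAbar]; rfl
  -- entry values for polynomial columns
  have EPoly : ∀ (i : Fin (N + 1)) (j : Fin 3) (c : Fin (3 * n + 4)),
      (c : ℕ) < 3 * n + 3 →
      Abar (i, j) c = if (c : ℕ) % 3 = (j : ℕ)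
        then ((((c : ℕ) / 3).descFactorial (i : ℕ) : ℝ)) * t ^ ((c : ℕ) / 3 - (i : ℕ))
        else 0 := by
    intro i j c hc
    rw [hA (i, j) c]
    by_cases hm : (c : ℕ) % 3 = (j : ℕ)
    · rw [if_pos hm]
      have hfun : (fun s : ℝ =>
          if (c : ℕ) < 3 * n + 3 then
            (if (c : ℕ) % 3 = (((i, j) : Fin (N+1) × Fin 3).2 : ℕ)
              then s ^ ((c : ℕ) / 3) else 0)
          else ρ s ((i, j) : Fin (N+1) × Fin 3).2)
          = fun s : ℝ => s ^ ((c : ℕ) / 3) := by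
        funext s; simp [hc, hm]
      rw [hfun, itd_pow]
    · rw [if_neg hm]
      have hfun : (fun s : ℝ =>
          if (c : ℕ) < 3 * n + 3 then
            (if (c : ℕ) % 3 = (((i, j) : Fin (N+1) × Fin 3).2 : ℕ)
              then s ^ ((c : ℕ) / 3) else 0)
          else ρ s ((i, j) : Fin (N+1) × Fin 3).2)
          = fun _ : ℝ => (0:ℝ) := by
        funext s; simp [hc, hm]
      rw [hfun, itd_zero]
  -- entry values for the last column
  have ELast : ∀ (i : Fin (N + 1)) (j : Fin 3) (c : Fin (3 * n + 4)),
      ¬((c : ℕ) < 3 * n + 3) →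
      Abar (i, j) c = iteratedDeriv (i : ℕ) ρ t j := by
    intro i j c hc
    rw [hA (i, j) c]
    have hfun : (fun s : ℝ =>
        if (c : ℕ) < 3 * n + 3 then
          (if (c : ℕ) % 3 = (((i, j) : Fin (N+1) × Fin 3).2 : ℕ)
            then s ^ ((c : ℕ) / 3) else 0)
        else ρ s ((i, j) : Fin (N+1) × Fin 3).2)
        = fun s : ℝ => ρ s j := by
      funext s; simp [hc]
    rw [hfun, itd_proj ρ hρ _ (Nat.lt_succ_iff.mp i.isLt) j t]
  have rowPoly0 : ∀ (i : Fin (N + 1)) (j : Fin 3) (b : Fin (3 * n + 4)),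
      (b : ℕ) < 3 * n + 3 → (b : ℕ) / 3 < (i : ℕ) → Abar (i, j) b = 0 := by
    intro i j b hb hlt
    rw [EPoly i j b hb]
    have hd : ((b : ℕ) / 3).descFactorial (i : ℕ) = 0 :=
      Nat.descFactorial_eq_zero_iff_lt.mpr hlt
    split_ifs <;> simp [hd]
  -- rank condition as linear independence of the columns
  have key : Abar.rank = 3 * n + 4 ↔ LinearIndependent ℝ Abarᵀ := by
    rw [Matrix.rank_eq_finrank_span_cols]
    refine (linearIndependent_iff_card_eq_finrank_span.trans ?_).symm
    rw [Fintype.card_fin]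
    unfold Set.finrank
    exact eq_comm
  rw [key]
  constructor
  · -- full rank implies some higher derivative of ρ is nonzero
    intro hLI
    by_contra hne
    push_neg at hne
    have hvan : ∀ (c : Fin (3 * n + 4)) (p : Fin (N + 1) × Fin 3),
        n + 1 ≤ (p.1 : ℕ) → Abar p c = 0 := by
      intro c p hp
      by_cases hc : (c : ℕ) < 3 * n + 3
      · exact rowPoly0 p.1 p.2 c hc (by omega)
      · rw [show Abar p c = iteratedDeriv (p.1 : ℕ) ρ t p.2 from
          ELast p.1 p.2 c hc]
        have := congrFun (hne (p.1 : ℕ) hp (Nat.lt_succ_iff.mp p.1.isLt)) p.2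
        simpa using this
    have hv : LinearIndependent ℝ
        (fun (c : Fin (3 * n + 4)) (q : Fin (n + 1) × Fin 3) =>
          Abar (⟨(q.1 : ℕ), by omega⟩, q.2) c) := by
      rw [Fintype.linearIndependent_iff]
      intro g hg
      have hg2 : ∑ c, g c • Abarᵀ c = 0 := by
        funext p
        have hsum : (∑ c, g c • Abarᵀ c) p = ∑ c, g c * Abar p c := by
          simp [Finset.sum_apply, Matrix.transpose_apply]
        rw [hsum]
        by_cases hp : (p.1 : ℕ) ≤ n
        · have h1 := congrFun hg (⟨(p.1 : ℕ), by omega⟩, p.2)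
          have h2 : (∑ c, g c • (fun (q : Fin (n + 1) × Fin 3) =>
              Abar (⟨(q.1 : ℕ), by omega⟩, q.2) c)) (⟨(p.1 : ℕ), by omega⟩, p.2)
              = ∑ c, g c * Abar (⟨(p.1 : ℕ), by omega⟩, p.2) c := by
            simp [Finset.sum_apply]
          rw [h2] at h1
          have hpp : ((⟨(p.1 : ℕ), by omega⟩ : Fin (N + 1)), p.2) = p := by
            apply Prod.ext <;> simp
          rw [hpp] at h1
          simpa using h1
        · push_neg at hp
          simp only [Pi.zero_apply]
          exact Finset.sum_eq_zero fun c _ => by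
            rw [hvan c p (by omega)]; ring
      exact Fintype.linearIndependent_iff.mp hLI g hg2
    have hcard2 := hv.fintype_card_le_finrank
    rw [Module.finrank_pi] at hcard2
    simp [Fintype.card_prod, Fintype.card_fin] at hcard2
    omega
  · -- nonzero higher derivative implies full column rank
    rintro ⟨i₀, hi₁, hi₂, hne⟩
    obtain ⟨j₀, hj₀⟩ : ∃ j, iteratedDeriv i₀ ρ t j ≠ 0 := by
      by_contra h; push_neg at h; exact hne (funext h)
    refine Fintype.linearIndependent_iff.mpr ?_
    intro g hg
    have hev : ∀ (p : Fin (N + 1) × Fin 3), ∑ c, g c * Abar p c = 0 := by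
      intro p
      have := congrFun hg p
      simpa [Finset.sum_apply, Matrix.transpose_apply] using this
    have hclast : (3 * n + 3 : ℕ) < 3 * n + 4 := by omega
    set clast : Fin (3 * n + 4) := ⟨3 * n + 3, hclast⟩ with hcl
    have hlast : g clast = 0 := by
      have h := hev (⟨i₀, by omega⟩, j₀)
      rw [Finset.sum_eq_single clast] at h
      · rw [show Abar (⟨i₀, by omega⟩, j₀) clast = iteratedDeriv i₀ ρ t j₀ from
          ELast _ _ clast (by show ¬(3 * n + 3 < 3 * n + 3); omega)] at h
        rcases mul_eq_zero.mp h with h0 | h0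
        · exact h0
        · exact absurd h0 hj₀
      · intro b _ hb
        have hbl : (b : ℕ) < 3 * n + 3 := by
          have h1 := b.isLt
          have h2 : (b : ℕ) ≠ 3 * n + 3 := fun e => hb (Fin.ext e)
          omega
        rw [rowPoly0 _ _ b hbl (show (b : ℕ) / 3 < i₀ by omega)]
        ring
      · exact fun h => absurd (Finset.mem_univ _) h
    have step : ∀ k : ℕ, k ≤ n →
        (∀ b : Fin (3 * n + 4), (b : ℕ) < 3 * n + 3 → k < (b : ℕ) / 3 → g b = 0) →
        ∀ (j : Fin 3) (c : Fin (3 * n + 4)), (c : ℕ) = 3 * k + (j : ℕ) → g c = 0 := by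
      intro k hk IH j c hc
      have hj3 := j.isLt
      have h := hev (⟨k, by omega⟩, j)
      rw [Finset.sum_eq_single c] at h
      · have hcl2 : (c : ℕ) < 3 * n + 3 := by omega
        rw [EPoly _ _ c hcl2] at h
        have hcm : (c : ℕ) % 3 = (j : ℕ) := by omega
        rw [if_pos hcm] at h
        have h' : g c * ((((c : ℕ) / 3).descFactorial k : ℝ) * t ^ ((c : ℕ) / 3 - k)) = 0 := h
        have hcd : (c : ℕ) / 3 = k := by omega
        rw [hcd, Nat.descFactorial_self, Nat.sub_self, pow_zero, mul_one] at h'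
        have hf : ((k.factorial : ℕ) : ℝ) ≠ 0 := Nat.cast_ne_zero.mpr k.factorial_ne_zero
        rcases mul_eq_zero.mp h' with h0 | h0
        · exact h0
        · exact absurd h0 hf
      · intro b _ hb
        by_cases hbl : (b : ℕ) < 3 * n + 3
        · rcases lt_trichotomy ((b : ℕ) / 3) k with hlt | heq | hgt
          · rw [rowPoly0 _ _ b hbl (show (b : ℕ) / 3 < k from hlt)]; ring
          · by_cases hbm : (b : ℕ) % 3 = (j : ℕ)
            · exact absurd (Fin.ext (by omega)) hb
            · rw [EPoly _ _ b hbl, if_neg hbm]; ring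
          · rw [IH b hbl hgt]; ring
        · have hbc : b = clast := Fin.ext (show (b : ℕ) = 3 * n + 3 by have := b.isLt; omega)
          rw [hbc, hlast]; ring
      · exact fun h => absurd (Finset.mem_univ _) h
    have down : ∀ d k, k ≤ n → n - k ≤ d →
        ∀ (j : Fin 3) (c : Fin (3 * n + 4)), (c : ℕ) = 3 * k + (j : ℕ) → g c = 0 := by
      intro d
      induction d with
      | zero =>
        intro k hk hd
        exact step k hk (fun b hbl hgt => absurd hgt (by omega))
      | succ d ih =>
        intro k hk hd
        refine step k hk (fun b hbl hgt => ?_)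
        exact ih ((b : ℕ) / 3) (by omega) (by omega) ⟨(b : ℕ) % 3, by omega⟩ b
          (show (b : ℕ) = 3 * ((b : ℕ) / 3) + (b : ℕ) % 3 by omega)
    intro c
    by_cases hc : (c : ℕ) < 3 * n + 3
    · exact down n ((c : ℕ) / 3) (by omega) (by omega) ⟨(c : ℕ) % 3, by omega⟩ c
        (show (c : ℕ) = 3 * ((c : ℕ) / 3) + (c : ℕ) % 3 by omega)
    · have hcc : c = clast := Fin.ext (show (c : ℕ) = 3 * n + 3 by have := c.isLt; omega)
      rw [hcc]; exact hlast
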